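/- In H_{n+1}(q,∞) (and, for k+1 ≤ d−1, in H_{n+1}(q,d)), for k ∈ ℕ and ε ∈ {+1, −1}: t_n^{ε(k+1)} = Σ_{r₁, …, r_k = 0}^{n} (q^ε − 1)^{ε_{r₁} + ⋯ + ε_{r_k}} q^{ε(r₁ + ⋯ + r_k)} · g_n^ε g_{n−1}^ε ⋯ g_1^ε t^ε (g_1^ε ⋯ g_{n−r₁}^ε ⋯ g_1^ε) t^ε ⋯ t^ε (g_1^ε ⋯ g_{n−r_k}^ε ⋯ g_1^ε) t^ε g_1^ε ⋯ g_{n−1}^ε g_n^ε, where ε_{r_i} = 1 if r_i ∈ {0, …, n−1}, ε_n = 0, and g_0^ε := 1 (so (g_1^ε ⋯ g_{n−r}^ε ⋯ g_1^ε) denotes the palindromic word g_1^ε g_2^ε ⋯ g_{n−r}^ε g_{n−r−1}^ε ⋯ g_1^ε, equal to 1 when r = n). -/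
import Mathlib


/-!
Knot theory related to generalized and cyclotomic Hecke algebras of type B
(S. Lambropoulou). Generic setting: an algebra containing invertible elements
`t, g_1, …, g_m` and a central invertible parameter `q` satisfying the defining
relations of the generalized type-`B` Hecke algebra `H_{m+1}(q,∞)`; both
`H_{m+1}(q,∞)` and the cyclotomic algebras `H_{m+1}(q,d)` are instances.
-/

namespace KnotTypeB

variable {A : Type*} [Ring A]

/-- The ascending word `g_i^e g_{i+1}^e ⋯ g_j^e` (the empty product `1` if `j + 1 ≤ i`). -/
def ascW (g : ℕ → Aˣ) (e : ℤ) (i j : ℕ) : A :=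
  ((List.range' i (j + 1 - i)).map fun l => ((g l ^ e : Aˣ) : A)).prod

/-- The descending word `g_j^e g_{j-1}^e ⋯ g_i^e` (the empty product `1` if `j + 1 ≤ i`). -/
def descW (g : ℕ → Aˣ) (e : ℤ) (j i : ℕ) : A :=
  ((List.range' i (j + 1 - i)).reverse.map fun l => ((g l ^ e : Aˣ) : A)).prod

/-- The palindromic word `g_i^e g_{i+1}^e ⋯ g_{m-1}^e g_m^e g_{m-1}^e ⋯ g_i^e`
(interpreted as `1` when `m < i`). -/
def palW (g : ℕ → Aˣ) (e : ℤ) (i m : ℕ) : A :=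
  ascW g e i m * descW g e (m - 1) i

/-- `t_i = g_i g_{i-1} ⋯ g_1 t g_1 ⋯ g_{i-1} g_i` (as a unit), `t_0 = t`. -/
def tW (g : ℕ → Aˣ) (t : Aˣ) : ℕ → Aˣ
  | 0 => t
  | i + 1 => g (i + 1) * tW g t i * g (i + 1)

/-- `t'_i = g_i g_{i-1} ⋯ g_1 t g_1⁻¹ ⋯ g_{i-1}⁻¹ g_i⁻¹` (as a unit), `t'_0 = t`. -/
def tpW (g : ℕ → Aˣ) (t : Aˣ) : ℕ → Aˣ
  | 0 => t
  | i + 1 => g (i + 1) * tpW g t i * (g (i + 1))⁻¹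

/-- `T_i^k = g_i g_{i-1} ⋯ g_1 t^k g_1 ⋯ g_{i-1} g_i` (as a unit), `T_0^k = t^k`. -/
def TTW (g : ℕ → Aˣ) (t : Aˣ) (k : ℤ) : ℕ → Aˣ
  | 0 => t ^ k
  | i + 1 => g (i + 1) * TTW g t k i * g (i + 1)

/-- The defining relations of the generalized Iwahori–Hecke algebra of type `B` with
invertible generators `t, g_1, …, g_m` and a central invertible parameter `q`:
the type-`B` braid relations together with the quadratic relations
`g_i² = (q-1)g_i + q`.  Any ring admitting such elements is (the image of) a
`ℤ[q^{±1}]`-algebra quotient of `H_{m+1}(q,∞)`; in particular the cyclotomic algebras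
`H_{m+1}(q,d)` also satisfy these hypotheses. -/
def HeckeRels (q t : Aˣ) (g : ℕ → Aˣ) (m : ℕ) : Prop :=
  (∀ a : A, (q : A) * a = a * (q : A)) ∧
  (∀ i, 1 ≤ i → i + 1 ≤ m → (g i : A) * g (i + 1) * g i = (g (i + 1) : A) * g i * g (i + 1)) ∧
  (∀ i j, 1 ≤ i → i + 1 < j → j ≤ m → (g i : A) * g j = (g j : A) * g i) ∧
  (1 ≤ m → (t : A) * g 1 * t * g 1 = (g 1 : A) * t * g 1 * t) ∧
  (∀ i, 2 ≤ i → i ≤ m → (t : A) * g i = (g i : A) * t) ∧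
  (∀ i, 1 ≤ i → i ≤ m → (g i : A) ^ 2 = ((q : A) - 1) * g i + (q : A))


section aux
variable (g : ℕ → Aˣ) (e : ℤ) (t : Aˣ)

lemma ascW_zero : ascW g e 1 0 = (1:A) := by simp [ascW]

lemma descW_zero : descW g e 0 1 = (1:A) := by simp [descW]

lemma ascW_succ (n : ℕ) : ascW g e 1 (n+1) = ascW g e 1 n * ((g (n+1) ^ e : Aˣ) : A) := by
  unfold ascW
  simp [List.range'_concat, Nat.add_comm 1 n]

lemma descW_succ (n : ℕ) : descW g e (n+1) 1 = ((g (n+1) ^ e : Aˣ) : A) * descW g e n 1 := by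
  unfold descW
  simp [List.range'_concat, Nat.add_comm 1 n]

lemma palW_succ (n : ℕ) : palW g e 1 (n+1) = ascW g e 1 (n+1) * descW g e n 1 := rfl

lemma palW_zero : palW g e 1 0 = (1:A) := by
  rw [palW, ascW_zero, show (0:ℕ)-1 = 0 from rfl, descW_zero, one_mul]

lemma tW_pow (he : e = 1 ∨ e = -1) (n : ℕ) :
    ((tW g t n ^ e : Aˣ) : A) = descW g e n 1 * ((t ^ e : Aˣ) : A) * ascW g e 1 n := by
  induction n with
  | zero => simp [tW, descW_zero, ascW_zero]
  | succ n ih =>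
    have key : (tW g t (n+1)) ^ e = g (n+1) ^ e * tW g t n ^ e * g (n+1) ^ e := by
      rcases he with rfl | rfl
      · simp [tW]
      · simp only [zpow_neg, zpow_one, tW, mul_inv_rev, mul_assoc]
    rw [key]
    push_cast
    rw [ih, descW_succ, ascW_succ]
    simp only [mul_assoc]


lemma cent_pow {x : A} (hx : ∀ a : A, x * a = a * x) (m : ℕ) (a : A) :
    x ^ m * a = a * x ^ m := by
  induction m with
  | zero => simp
  | succ m ih => rw [pow_succ, mul_assoc, hx, ← mul_assoc, ih, mul_assoc]

lemma central_shuffle {y : A} (hy : ∀ a : A, y * a = a * y) (x u v : A) :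
    x * u * (y * v) = (x * y) * (u * v) := by
  rw [mul_assoc x, ← mul_assoc u, ← hy, mul_assoc y, ← mul_assoc x, ← mul_assoc]

lemma asc_desc (Q : A) (hQ : ∀ a : A, Q * a = a * Q) (n : ℕ)
    (hquad : ∀ i, 1 ≤ i → i ≤ n → ((g i ^ e : Aˣ) : A) ^ 2 = (Q - 1) * ((g i ^ e : Aˣ) : A) + Q) :
    ascW g e 1 n * descW g e n 1 =
      ∑ r : Fin (n+1), (Q - 1) ^ (if (r : ℕ) < n then 1 else 0) * Q ^ (r : ℕ) *
        palW g e 1 (n - (r : ℕ)) := by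
  have hq1 : ∀ a : A, (Q - 1) * a = a * (Q - 1) := fun a => by
    rw [sub_mul, mul_sub, hQ a, mul_one, one_mul]
  induction n with
  | zero =>
    simp [ascW_zero, descW_zero, palW_zero]
  | succ n ih =>
    rw [ascW_succ, descW_succ]
    set h := ((g (n+1) ^ e : Aˣ) : A) with hh
    have e1 : ascW g e 1 n * h * (h * descW g e n 1)
        = (Q - 1) * palW g e 1 (n+1) + Q * (ascW g e 1 n * descW g e n 1) := by
      have e0 : ascW g e 1 n * h * (h * descW g e n 1)
          = ascW g e 1 n * h ^ 2 * descW g e n 1 := by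
        rw [sq]; simp only [mul_assoc]
      rw [e0, hquad (n+1) (by omega) (by omega), mul_add, add_mul, ← mul_assoc,
        ← hq1 (ascW g e 1 n), palW_succ, ascW_succ]
      congr 1
      · simp only [mul_assoc]
      · rw [← mul_assoc, ← hQ, mul_assoc]
    rw [e1, ih (fun i h1 h2 => hquad i h1 (by omega)), Finset.mul_sum]
    conv_rhs => rw [Fin.sum_univ_succ]
    congr 1
    · simp [palW_succ]
    · refine Finset.sum_congr rfl fun i _ => ?_
      simp only [Fin.val_succ]
      rw [show (n + 1 - ((i:ℕ) + 1)) = n - (i:ℕ) from by omega,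
        show (if (i:ℕ) + 1 < n + 1 then 1 else 0) = (if (i:ℕ) < n then 1 else 0) from by
          simp [Nat.succ_lt_succ_iff],
        show (if (i:ℕ) < n then 1 else 0) = (if (i:ℕ) < n then 1 else 0) from rfl]
      set a : ℕ := if (i:ℕ) < n then 1 else 0 with ha
      set P := palW g e 1 (n - (i:ℕ)) with hP
      calc Q * ((Q - 1) ^ a * Q ^ (i:ℕ) * P)
          = Q * (Q - 1) ^ a * Q ^ (i:ℕ) * P := by simp only [mul_assoc]
        _ = (Q - 1) ^ a * Q * Q ^ (i:ℕ) * P := by rw [← cent_pow hq1 a Q]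
        _ = (Q - 1) ^ a * Q ^ ((i:ℕ)+1) * P := by rw [mul_assoc ((Q-1)^a), ← pow_succ']

lemma central_mul {x y : A} (hx : ∀ a : A, x * a = a * x) (hy : ∀ a : A, y * a = a * y) :
    ∀ a : A, (x * y) * a = a * (x * y) := fun a => by
  rw [mul_assoc, hy a, ← mul_assoc, hx a, mul_assoc]

lemma xy_pow (x y : A) (k : ℕ) : (x * y) ^ (k + 1) = x * (y * x) ^ k * y := by
  induction k with
  | zero => simp
  | succ k ih => rw [pow_succ, ih, pow_succ]; simp only [mul_assoc]

lemma quad_e (q x : Aˣ) (hc : ∀ a : A, (q : A) * a = a * (q : A))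
    (hq2 : ((x : A)) ^ 2 = ((q : A) - 1) * (x : A) + (q : A)) (e : ℤ) (he : e = 1 ∨ e = -1) :
    ((x ^ e : Aˣ) : A) ^ 2 = (((q ^ e : Aˣ) : A) - 1) * ((x ^ e : Aˣ) : A) + ((q ^ e : Aˣ) : A) := by
  rcases he with rfl | rfl
  · simpa using hq2
  · simp only [zpow_neg, zpow_one]
    set X := ((x : Aˣ) : A)
    set Xi := ((x⁻¹ : Aˣ) : A) with hXi
    set Qc := ((q : Aˣ) : A)
    set Qi := ((q⁻¹ : Aˣ) : A) with hQi
    have hXXi : X * Xi = 1 := Units.mul_inv x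
    have hXiX : Xi * X = 1 := Units.inv_mul x
    have hQQi : Qc * Qi = 1 := Units.mul_inv q
    have hQiQ : Qi * Qc = 1 := Units.inv_mul q
    have h2 : X = (Qc - 1) + Qc * Xi := by
      calc X = X * (X * Xi) := by rw [hXXi, mul_one]
        _ = X ^ 2 * Xi := by rw [sq]; simp only [mul_assoc]
        _ = ((Qc - 1) * X + Qc) * Xi := by rw [hq2]
        _ = (Qc - 1) * (X * Xi) + Qc * Xi := by rw [add_mul, mul_assoc]
        _ = (Qc - 1) + Qc * Xi := by rw [hXXi, mul_one]
    have h3 : Xi = Qi * (X - (Qc - 1)) := by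
      have h4 : Qc * Xi = X - (Qc - 1) := by rw [h2, add_sub_cancel_left]
      calc Xi = (Qi * Qc) * Xi := by rw [hQiQ, one_mul]
        _ = Qi * (Qc * Xi) := mul_assoc _ _ _
        _ = Qi * (X - (Qc - 1)) := by rw [h4]
    have h5 : Qi * (Qc - 1) = 1 - Qi := by rw [mul_sub, hQiQ, mul_one]
    calc Xi ^ 2 = (Qi * (X - (Qc - 1))) * Xi := by rw [sq, ← h3]
      _ = Qi * ((X - (Qc - 1)) * Xi) := mul_assoc _ _ _
      _ = Qi * (X * Xi - (Qc - 1) * Xi) := by rw [sub_mul]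
      _ = Qi * (1 - (Qc - 1) * Xi) := by rw [hXXi]
      _ = Qi - (Qi * (Qc - 1)) * Xi := by rw [mul_sub, mul_one, mul_assoc]
      _ = Qi - (1 - Qi) * Xi := by rw [h5]
      _ = (Qi - 1) * Xi + Qi := by rw [sub_mul, sub_mul, one_mul]; abel

lemma pow_sum_expand (Q : A) (hQ : ∀ a : A, Q * a = a * Q) (n : ℕ) (b : Fin (n+1) → A) (k : ℕ) :
    (∑ r : Fin (n+1), (Q - 1) ^ (if (r : ℕ) < n then 1 else 0) * Q ^ (r : ℕ) * b r) ^ k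
      = ∑ f : Fin k → Fin (n+1),
          (Q - 1) ^ (Finset.univ.filter fun i => ((f i : ℕ) < n)).card * Q ^ (∑ i, (f i : ℕ)) *
          ((List.finRange k).map fun i => b (f i)).prod := by
  have hq1 : ∀ a : A, (Q - 1) * a = a * (Q - 1) := fun a => by
    rw [sub_mul, mul_sub, hQ a, mul_one, one_mul]
  induction k with
  | zero => simp
  | succ k ih =>
    rw [pow_succ', ih, Finset.sum_mul]
    conv_rhs => rw [← Equiv.sum_comp (Fin.consEquiv (fun _ => Fin (n+1)))]
    rw [Fintype.sum_prod_type]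
    refine Finset.sum_congr rfl fun r _ => ?_
    rw [Finset.mul_sum]
    refine Finset.sum_congr rfl fun f _ => ?_
    have hcons : (Fin.consEquiv (fun _ => Fin (n+1))) (r, f) = Fin.cons (α := fun _ => Fin (n+1)) r f := rfl
    rw [hcons]
    have hcard : (Finset.univ.filter fun i : Fin (k+1) => ((Fin.cons (α := fun _ => Fin (n+1)) r f) i : ℕ) < n).card
        = (if (r : ℕ) < n then 1 else 0)
          + (Finset.univ.filter fun i : Fin k => ((f i : ℕ) < n)).card := by
      rw [Finset.card_filter, Finset.card_filter, Fin.sum_univ_succ]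
      simp
    have hsum : (∑ i : Fin (k+1), ((Fin.cons (α := fun _ => Fin (n+1)) r f) i : ℕ))
        = (r : ℕ) + ∑ i : Fin k, ((f i : ℕ)) := by
      rw [Fin.sum_univ_succ]; simp
    have hlist : ((List.finRange (k+1)).map fun i => b ((Fin.cons (α := fun _ => Fin (n+1)) r f) i))
        = b r :: ((List.finRange k).map fun i => b (f i)) := by
      rw [List.finRange_succ, List.map_cons, List.map_map]
      simp [Function.comp_def]
    rw [hcard, hsum, hlist, List.prod_cons, pow_add, pow_add]
    set ar : ℕ := if (r : ℕ) < n then 1 else 0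
    set af : ℕ := (Finset.univ.filter fun i : Fin k => ((f i : ℕ) < n)).card
    set sf : ℕ := ∑ i : Fin k, ((f i : ℕ))
    set Bf : A := ((List.finRange k).map fun i => b (f i)).prod
    have hYc : ∀ a : A, ((Q - 1) ^ af * Q ^ sf) * a = a * ((Q - 1) ^ af * Q ^ sf) :=
      central_mul (cent_pow hq1 af) (cent_pow hQ sf)
    calc ((Q - 1) ^ ar * Q ^ (r : ℕ) * b r) * ((Q - 1) ^ af * Q ^ sf * Bf)
        = ((Q - 1) ^ ar * Q ^ (r : ℕ) * b r) * (((Q - 1) ^ af * Q ^ sf) * Bf) := by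
          simp only [mul_assoc]
      _ = (((Q - 1) ^ ar * Q ^ (r : ℕ)) * ((Q - 1) ^ af * Q ^ sf)) * (b r * Bf) :=
          central_shuffle hYc _ _ _
      _ = (((Q - 1) ^ ar * (Q - 1) ^ af) * (Q ^ (r : ℕ) * Q ^ sf)) * (b r * Bf) := by
          rw [central_shuffle (cent_pow hq1 af) ((Q-1)^ar) (Q ^ (r:ℕ)) (Q ^ sf)]
      _ = (Q - 1) ^ ar * (Q - 1) ^ af * (Q ^ (r : ℕ) * Q ^ sf) * (b r * Bf) := by
          simp only [mul_assoc]


end aux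

/-- Lemma 3.  In `H_{n+1}(q,∞)` (and, for `k+1 ≤ d-1`, in
`H_{n+1}(q,d)`), for `k ∈ ℕ` and `ε ∈ {+1, -1}`:
`t_n^{ε(k+1)} = ∑_{r₁,…,r_k=0}^{n} (q^ε-1)^{ε_{r₁}+⋯+ε_{r_k}} q^{ε(r₁+⋯+r_k)} ·
   g_n^ε ⋯ g_1^ε t^ε (g_1^ε ⋯ g_{n-r₁}^ε ⋯ g_1^ε) t^ε ⋯ t^ε (g_1^ε ⋯ g_{n-r_k}^ε ⋯ g_1^ε)
   t^ε g_1^ε ⋯ g_n^ε`,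
where `ε_{r} = 1` if `r ≤ n-1` and `ε_n = 0`, and `g_0^ε := 1` (so the palindromic factor
is `1` when `r = n`). -/
theorem statement_10 {A : Type*} [Ring A] (q t : Aˣ) (g : ℕ → Aˣ) (n : ℕ)
    (hrel : HeckeRels q t g n) (e : ℤ) (he : e = 1 ∨ e = -1) (k : ℕ) :
    ((tW g t n ^ (e * ((k : ℤ) + 1)) : Aˣ) : A) =
      ∑ r : Fin k → Fin (n + 1),
        (((q ^ e : Aˣ) : A) - 1) ^ (Finset.univ.filter fun i => ((r i : ℕ) < n)).card *
          ((q ^ e : Aˣ) : A) ^ (∑ i, (r i : ℕ)) *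
          (descW g e n 1 * ((t ^ e : Aˣ) : A) *
            ((List.finRange k).map fun i =>
              palW g e 1 (n - (r i : ℕ)) * ((t ^ e : Aˣ) : A)).prod *
            ascW g e 1 n) := by
  obtain ⟨hc, -, -, -, -, hquad⟩ := hrel
  set Q : A := ((q ^ e : Aˣ) : A) with hQdef
  have hQc : ∀ a : A, Q * a = a * Q := by
    rcases he with rfl | rfl
    · intro a; simp only [hQdef, zpow_one]; exact hc a
    · intro a
      simp only [hQdef, zpow_neg, zpow_one]
      calc (↑q⁻¹ : A) * a = ↑q⁻¹ * a * (↑q * ↑q⁻¹) := by rw [Units.mul_inv, mul_one]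
        _ = ↑q⁻¹ * (a * ↑q) * ↑q⁻¹ := by simp only [mul_assoc]
        _ = ↑q⁻¹ * (↑q * a) * ↑q⁻¹ := by rw [← hc a]
        _ = (↑q⁻¹ * ↑q) * (a * ↑q⁻¹) := by simp only [mul_assoc]
        _ = a * ↑q⁻¹ := by rw [Units.inv_mul, one_mul]
  have hq1 : ∀ a : A, (Q - 1) * a = a * (Q - 1) := fun a => by
    rw [sub_mul, mul_sub, hQc a, mul_one, one_mul]
  have hquadE : ∀ i, 1 ≤ i → i ≤ n →
      ((g i ^ e : Aˣ) : A) ^ 2 = (Q - 1) * ((g i ^ e : Aˣ) : A) + Q :=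
    fun i h1 h2 => quad_e q (g i) hc (hquad i h1 h2) e he
  set D : A := descW g e n 1
  set U : A := ascW g e 1 n
  set T : A := ((t ^ e : Aˣ) : A)
  have h1 : ((tW g t n ^ (e * ((k : ℤ) + 1)) : Aˣ) : A) = ((tW g t n ^ e : Aˣ) : A) ^ (k + 1) := by
    rw [zpow_mul, show ((k : ℤ) + 1) = ((k + 1 : ℕ) : ℤ) by push_cast; ring, zpow_natCast]
    exact Units.val_pow_eq_pow_val _ _
  rw [h1, tW_pow g e t he n]
  rw [show (D * T * U) ^ (k + 1) = (D * T) * (U * (D * T)) ^ k * U from xy_pow (D * T) U k]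
  have hUD : U * (D * T) = ∑ r : Fin (n+1),
      (Q - 1) ^ (if (r : ℕ) < n then 1 else 0) * Q ^ (r : ℕ) * (palW g e 1 (n - (r : ℕ)) * T) := by
    rw [← mul_assoc, asc_desc g e Q hQc n hquadE, Finset.sum_mul]
    simp only [mul_assoc]
  rw [hUD, pow_sum_expand Q hQc n (fun r => palW g e 1 (n - (r : ℕ)) * T) k,
    Finset.mul_sum, Finset.sum_mul]
  refine Finset.sum_congr rfl fun f _ => ?_
  set Cf : A := (Q - 1) ^ (Finset.univ.filter fun i => ((f i : ℕ) < n)).card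
      * Q ^ (∑ i, (f i : ℕ)) with hCf
  set Bf : A := ((List.finRange k).map fun i => palW g e 1 (n - (f i : ℕ)) * T).prod with hBf
  have hCfc : ∀ a : A, Cf * a = a * Cf :=
    central_mul (cent_pow hq1 _) (cent_pow hQc _)
  calc (D * T) * (Cf * Bf) * U = (D * T) * Cf * (Bf * U) := by simp only [mul_assoc]
    _ = Cf * (D * T) * (Bf * U) := by rw [← hCfc (D * T)]
    _ = Cf * (D * T * Bf * U) := by simp only [mul_assoc]

end KnotTypeB
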